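/- Let Θ be a Young function and set θ(t) := Θ⁻¹(t^{-n}) for t > 0. Then the weak Orlicz–Morrey space wM_{θ,Θ}(ℝⁿ) coincides with the weak Orlicz space wL_Θ(ℝⁿ), with equivalent quasi-norms; i.e., there are constants c, C > 0 with c‖f‖_{wL_Θ(ℝⁿ)} ≤ ‖f‖_{wM_{θ,Θ}(ℝⁿ)} ≤ C‖f‖_{wL_Θ(ℝⁿ)} for all measurable f. -/

import Mathlib

open MeasureTheory Metric Set ENNReal

noncomputable section

/-- A Young function: convex, continuous, vanishing at 0, nonnegative, tending to ∞. -/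
def IsYoung (Θ : ℝ → ℝ) : Prop :=
  ConvexOn ℝ (Set.Ici 0) Θ ∧ ContinuousOn Θ (Set.Ici 0) ∧ Θ 0 = 0 ∧
  (∀ t, 0 ≤ t → 0 ≤ Θ t) ∧ Filter.Tendsto Θ Filter.atTop Filter.atTop

/-- Generalized inverse Θ⁻¹(s) = inf {r ≥ 0 : Θ r > s}. -/
def invY (Θ : ℝ → ℝ) (s : ℝ) : ℝ := sInf {r : ℝ | 0 ≤ r ∧ s < Θ r}

abbrev En (n : ℕ) := EuclideanSpace ℝ (Fin n)

/-- Luxemburg norm on a set B. -/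
def luxNorm {n : ℕ} (Θ : ℝ → ℝ) (B : Set (En n)) (f : En n → ℝ) : ℝ≥0∞ :=
  sInf {e : ℝ≥0∞ | ∃ b : ℝ, 0 < b ∧ e = ENNReal.ofReal b ∧
    ∫⁻ x in B, ENNReal.ofReal (Θ (|f x| / b)) ∂volume ≤ 1}

/-- Weak Luxemburg quasi-norm on a set B. -/
def wLuxNorm {n : ℕ} (Θ : ℝ → ℝ) (B : Set (En n)) (f : En n → ℝ) : ℝ≥0∞ :=
  sInf {e : ℝ≥0∞ | ∃ b : ℝ, 0 < b ∧ e = ENNReal.ofReal b ∧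
    ∀ t : ℝ, 0 < t → ENNReal.ofReal (Θ t) * volume {x ∈ B | t < |f x| / b} ≤ 1}

/-- Orlicz–Morrey norm (Deringoz–Guliyev–Samko). -/
def morreyNorm (n : ℕ) (θ Θ : ℝ → ℝ) (f : En n → ℝ) : ℝ≥0∞ :=
  ⨆ (a : En n) (r : ℝ) (_ : 0 < r),
    ENNReal.ofReal ((1 / θ ((volume (ball a r)).toReal ^ ((1:ℝ)/n))) *
      invY Θ (1 / (volume (ball a r)).toReal)) * luxNorm Θ (ball a r) f

/-- Weak Orlicz–Morrey quasi-norm. -/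
def wMorreyNorm (n : ℕ) (θ Θ : ℝ → ℝ) (f : En n → ℝ) : ℝ≥0∞ :=
  ⨆ (a : En n) (r : ℝ) (_ : 0 < r),
    ENNReal.ofReal ((1 / θ ((volume (ball a r)).toReal ^ ((1:ℝ)/n))) *
      invY Θ (1 / (volume (ball a r)).toReal)) * wLuxNorm Θ (ball a r) f

/-- The class G_θ : θ positive and decreasing, with t ↦ Θ⁻¹(t^{-n})/θ(t) almost decreasing. -/
def Gclass (n : ℕ) (Θ θ : ℝ → ℝ) : Prop :=
  (∀ t : ℝ, 0 < t → 0 < θ t) ∧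
  (∀ s t : ℝ, 0 < s → s ≤ t → θ t ≤ θ s) ∧
  ∃ C : ℝ, 0 < C ∧ ∀ s t : ℝ, 0 < s → s ≤ t →
    invY Θ (t ^ (-(n:ℝ))) / θ t ≤ C * (invY Θ (s ^ (-(n:ℝ))) / θ s)

/-- Θ₁ ≺ Θ₂. -/
def prec (Θ₁ Θ₂ : ℝ → ℝ) : Prop := ∃ C : ℝ, 0 < C ∧ ∀ t : ℝ, 0 < t → Θ₁ t ≤ Θ₂ (C * t)

/-- Θ₁⁻¹ ≲ Θ₂⁻¹. -/
def invLesssim (Θ₁ Θ₂ : ℝ → ℝ) : Prop :=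
  ∃ C : ℝ, 0 < C ∧ ∀ t : ℝ, 0 < t → invY Θ₁ t ≤ C * invY Θ₂ t

lemma invY_pos {Θ : ℝ → ℝ} (hΘ : IsYoung Θ) {s : ℝ} (hs : 0 < s) : 0 < invY Θ s := by
  obtain ⟨hconv, hcont, h0, hnn, htop⟩ := hΘ
  have hne : {r : ℝ | 0 ≤ r ∧ s < Θ r}.Nonempty := by
    obtain ⟨r, hr1, hr2⟩ :=
      ((htop.eventually_gt_atTop s).and (Filter.eventually_ge_atTop (0:ℝ))).exists
    exact ⟨r, hr2, hr1⟩
  have hc : ContinuousWithinAt Θ (Set.Ici 0) 0 := hcont 0 (by simp)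
  rw [Metric.continuousWithinAt_iff] at hc
  obtain ⟨δ, hδ, hδ'⟩ := hc s hs
  refine lt_of_lt_of_le hδ (le_csInf hne ?_)
  rintro r ⟨hr0, hrs⟩
  by_contra h
  push_neg at h
  have := hδ' hr0 (by rw [Real.dist_eq, sub_zero, abs_of_nonneg hr0]; exact h)
  rw [Real.dist_eq, h0, sub_zero, abs_of_nonneg (hnn r hr0)] at this
  exact absurd hrs (not_lt.mpr this.le)

lemma wLuxNorm_mono {n : ℕ} (Θ : ℝ → ℝ) {B B' : Set (En n)} (h : B ⊆ B') (f : En n → ℝ) :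
    wLuxNorm Θ B f ≤ wLuxNorm Θ B' f := by
  apply sInf_le_sInf
  rintro e ⟨b, hb, rfl, hcond⟩
  refine ⟨b, hb, rfl, fun t ht => le_trans (mul_le_mul_right (measure_mono ?_) _) (hcond t ht)⟩
  exact fun x hx => ⟨h hx.1, hx.2⟩

lemma cond_of_lt {n : ℕ} (Θ : ℝ → ℝ) (B : Set (En n)) (f : En n → ℝ)
    {b : ℝ} (hb : 0 < b) (h : wLuxNorm Θ B f < ENNReal.ofReal b) :
    ∀ t : ℝ, 0 < t → ENNReal.ofReal (Θ t) * volume {x ∈ B | t < |f x| / b} ≤ 1 := by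
  rw [wLuxNorm, sInf_lt_iff] at h
  obtain ⟨e, ⟨b', hb', rfl, hcond⟩, hlt⟩ := h
  have hbb : b' ≤ b := ((ENNReal.ofReal_lt_ofReal_iff hb).mp hlt).le
  intro t ht
  refine le_trans (mul_le_mul_right (measure_mono ?_) _) (hcond t ht)
  rintro x ⟨hx, hxt⟩
  refine ⟨hx, lt_of_lt_of_le hxt ?_⟩
  gcongr

theorem stmt13 (n : ℕ) (hn : 0 < n) (Θ : ℝ → ℝ) (hΘ : IsYoung Θ) :
    ∃ c C : ℝ, 0 < c ∧ 0 < C ∧ ∀ f : En n → ℝ, Measurable f →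
      ENNReal.ofReal c * wLuxNorm Θ (Set.univ : Set (En n)) f ≤
        wMorreyNorm n (fun t => invY Θ (t ^ (-(n:ℝ)))) Θ f ∧
      wMorreyNorm n (fun t => invY Θ (t ^ (-(n:ℝ)))) Θ f ≤
        ENNReal.ofReal C * wLuxNorm Θ (Set.univ : Set (En n)) f := by
  refine ⟨1, 1, one_pos, one_pos, fun f hf => ?_⟩
  have hM : wMorreyNorm n (fun t => invY Θ (t ^ (-(n:ℝ)))) Θ f =
      ⨆ (a : En n) (r : ℝ) (_ : 0 < r), wLuxNorm Θ (ball a r) f := by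
    unfold wMorreyNorm
    refine iSup_congr fun a => iSup_congr fun r => iSup_congr fun hr => ?_
    have hv : 0 < (volume (ball a r)).toReal :=
      ENNReal.toReal_pos (measure_ball_pos volume a hr).ne' measure_ball_lt_top.ne
    set v := (volume (ball a r)).toReal with hvdef
    have h1 : (v ^ ((1:ℝ)/n)) ^ (-(n:ℝ)) = 1 / v := by
      rw [← Real.rpow_mul hv.le]
      have hne : (n:ℝ) ≠ 0 := Nat.cast_ne_zero.mpr hn.ne'
      have : (1:ℝ)/n * (-(n:ℝ)) = -1 := by field_simp
      rw [this, Real.rpow_neg_one, one_div]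
    have hx : 0 < invY Θ (1 / v) := invY_pos hΘ (by positivity)
    simp only [h1]
    rw [one_div_mul_cancel hx.ne', ENNReal.ofReal_one, one_mul]
  rw [hM]
  set M := ⨆ (a : En n) (r : ℝ) (_ : 0 < r), wLuxNorm Θ (ball a r) f with hMdef
  constructor
  · rw [ENNReal.ofReal_one, one_mul]
    rcases eq_top_or_lt_top M with hMt | hMt
    · simp [hMt]
    have hMle : ∀ k : ℕ, wLuxNorm Θ (ball (0 : En n) ((k:ℝ)+1)) f ≤ M := fun k =>
      le_iSup_of_le 0 (le_iSup_of_le ((k:ℝ)+1) (le_iSup_of_le (by positivity) le_rfl))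
    refine ENNReal.le_of_forall_pos_le_add fun ε hε _ => ?_
    set b : ℝ := M.toReal + ε with hbdef
    have hb : 0 < b := by positivity
    have hMb : M < ENNReal.ofReal b := by
      conv_lhs => rw [← ENNReal.ofReal_toReal hMt.ne]
      rw [ENNReal.ofReal_lt_ofReal_iff hb]
      exact lt_add_of_pos_right _ (by exact_mod_cast hε)
    have hcond : ∀ t : ℝ, 0 < t →
        ENNReal.ofReal (Θ t) * volume {x ∈ (Set.univ : Set (En n)) | t < |f x| / b} ≤ 1 := by
      intro t ht
      have hUnion : {x ∈ (Set.univ : Set (En n)) | t < |f x| / b} =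
          ⋃ k : ℕ, {x ∈ ball (0:En n) ((k:ℝ)+1) | t < |f x| / b} := by
        ext x
        simp only [mem_setOf_eq, mem_univ, true_and, mem_iUnion, mem_ball]
        constructor
        · intro hx
          obtain ⟨k, hk⟩ := exists_nat_gt (dist x (0:En n))
          exact ⟨k, hk.trans (lt_add_one _), hx⟩
        · rintro ⟨k, _, hx⟩; exact hx
      have hdir : Directed (· ⊆ ·) fun k : ℕ => {x ∈ ball (0:En n) ((k:ℝ)+1) | t < |f x| / b} := by
        refine (Monotone.directed_le ?_)
        intro i j hij x hx
        exact ⟨ball_subset_ball (by exact_mod_cast Nat.add_le_add_right hij 1) hx.1,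
          hx.2⟩
      rw [hUnion, hdir.measure_iUnion, ENNReal.mul_iSup]
      exact iSup_le fun k =>
        cond_of_lt Θ _ f hb (lt_of_le_of_lt (hMle k) hMb) t ht
    calc wLuxNorm Θ (Set.univ : Set (En n)) f ≤ ENNReal.ofReal b :=
          sInf_le ⟨b, hb, rfl, hcond⟩
      _ = M + ε := by
          rw [hbdef, ENNReal.ofReal_add ENNReal.toReal_nonneg ε.coe_nonneg,
            ENNReal.ofReal_toReal hMt.ne, ENNReal.ofReal_coe_nnreal]
  · rw [ENNReal.ofReal_one, one_mul]
    exact iSup_le fun a => iSup_le fun r => iSup_le fun _ =>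
      wLuxNorm_mono Θ (subset_univ _) f
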